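/- Let $A, B, C$ be finite subsets of $\mathbb{Z}^5$ and define the cross term $\chi(A,B) = \sum_{x \in A}\sum_{y \in B} \mathbb{P}^x(\tau_A = \infty)\, G_D(x-y)\, \mathbb{P}^y(\tau_B = \infty)$. Then $0 \le \chi(A,C) + \chi(B,C) - \chi(A\cup B, C)$, and moreover there is a universal constant $C_0$ such that $\chi(A,C) + \chi(B,C) - \chi(A\cup B, C) \le C_0\big(\sum_{x\in A}\sum_{y\in B}\sum_{z\in C} G_D(x-y)G_D(y-z) + \sum_{x\in A}\sum_{y\in B}\sum_{z\in C} G_D(x-y)G_D(x-z)\big)$. -/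

import Mathlib

open MeasureTheory ProbabilityTheory Filter Finset
open scoped ENNReal

noncomputable section

abbrev Zd (d : ℕ) := Fin d → ℤ

/-- The set of unit steps of the simple random walk on `ℤ^d`. -/
def stepSetD (d : ℕ) : Finset (Zd d) :=
  Finset.image
    (fun p : Fin d × Bool => fun j => if j = p.1 then (if p.2 then (1:ℤ) else -1) else 0)
    Finset.univ

/-- `ℙ^x(τ_A = ∞)`: the walk started at `x` (with increments `X`) never hits `A`
at a positive time. -/
def escProb {Ω : Type*} [MeasurableSpace Ω] (μ : Measure Ω) {d : ℕ}
    (X : ℕ → Ω → Zd d) (A : Finset (Zd d)) (x : Zd d) : ℝ :=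
  (μ {ω | ∀ n, 1 ≤ n → x + ∑ k ∈ Finset.range n, X k ω ∉ A}).toReal

/-- `ℙ^x(τ_A < ∞)`: the walk started at `x` hits `A` at some positive time. -/
def hitProb {Ω : Type*} [MeasurableSpace Ω] (μ : Measure Ω) {d : ℕ}
    (X : ℕ → Ω → Zd d) (A : Finset (Zd d)) (x : Zd d) : ℝ :=
  (μ {ω | ∃ n, 1 ≤ n ∧ x + ∑ k ∈ Finset.range n, X k ω ∈ A}).toReal

/-- The discrete Green's function `G_D(v) = ∑_{n ≥ 0} ℙ^0(S_n = v)`. -/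
def greenFn {Ω : Type*} [MeasurableSpace Ω] (μ : Measure Ω) {d : ℕ}
    (X : ℕ → Ω → Zd d) (v : Zd d) : ℝ :=
  (∑' n : ℕ, μ {ω | (∑ k ∈ Finset.range n, X k ω) = v}).toReal

/-- The cross term `χ(A,B)`. -/
def crossTerm {Ω : Type*} [MeasurableSpace Ω] (μ : Measure Ω)
    (X : ℕ → Ω → Zd 5) (A B : Finset (Zd 5)) : ℝ :=
  ∑ x ∈ A, ∑ y ∈ B,
    escProb μ X A x * greenFn μ X (x - y) * escProb μ X B y

/-- The Newtonian capacity `cap(A)`. -/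
def capa {Ω : Type*} [MeasurableSpace Ω] (μ : Measure Ω)
    (X : ℕ → Ω → Zd 5) (A : Finset (Zd 5)) : ℝ :=
  ∑ x ∈ A, escProb μ X A x


namespace SRW5

variable {Ω : Type*} [MeasurableSpace Ω] (μ : Measure Ω) [IsProbabilityMeasure μ]
    (X : ℕ → Ω → Zd 5)

lemma meas_S (hmeas : ∀ n, Measurable (X n)) (n : ℕ) :
    Measurable (fun ω => ∑ k ∈ Finset.range n, X k ω) :=
  Finset.measurable_sum _ (fun k _ => hmeas k)

lemma neg_mem_step : ∀ s ∈ stepSetD 5, -s ∈ stepSetD 5 := by decide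

lemma step_recursion (hmeas : ∀ n, Measurable (X n))
    (hindep : iIndepFun X μ)
    (hdist : ∀ n v, μ {ω | X n ω = v} = if v ∈ stepSetD 5 then (10 : ℝ≥0∞)⁻¹ else 0)
    (n : ℕ) (v : Zd 5) :
    μ {ω | (∑ k ∈ Finset.range (n+1), X k ω) = v}
      = ∑ s ∈ stepSetD 5, (10:ℝ≥0∞)⁻¹ * μ {ω | (∑ k ∈ Finset.range n, X k ω) = v - s} := by
  have hS := meas_S X hmeas n
  have hind : IndepFun (fun ω => ∑ k ∈ Finset.range n, X k ω) (X n) μ := by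
    have h := hindep.indepFun_sum_range_succ (fun i => hmeas i) n
    have he : (∑ j ∈ Finset.range n, X j) = (fun ω => ∑ k ∈ Finset.range n, X k ω) := by
      ext ω; simp
    rwa [he] at h
  have hset : {ω | (∑ k ∈ Finset.range (n+1), X k ω) = v}
      = ⋃ s : Zd 5, ((fun ω => ∑ k ∈ Finset.range n, X k ω) ⁻¹' {v - s} ∩ X n ⁻¹' {s}) := by
    ext ω
    simp only [Set.mem_setOf_eq, Set.mem_iUnion, Set.mem_inter_iff, Set.mem_preimage,
      Set.mem_singleton_iff, Finset.sum_range_succ]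
    constructor
    · intro h
      exact ⟨X n ω, by rw [← h]; abel, rfl⟩
    · rintro ⟨s, h1, h2⟩
      rw [h2, h1]; abel
  have hdisj : Pairwise (Function.onFun Disjoint
      (fun s : Zd 5 => ((fun ω => ∑ k ∈ Finset.range n, X k ω) ⁻¹' {v - s} ∩ X n ⁻¹' {s}))) := by
    intro s t hst
    refine Set.disjoint_left.2 ?_
    rintro ω ⟨-, h2⟩ ⟨-, h4⟩
    exact hst (h2.symm.trans h4)
  have hmeas' : ∀ s : Zd 5, MeasurableSet
      ((fun ω => ∑ k ∈ Finset.range n, X k ω) ⁻¹' {v - s} ∩ X n ⁻¹' {s}) := by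
    intro s
    exact (hS (measurableSet_singleton _)).inter ((hmeas n) (measurableSet_singleton _))
  rw [hset, measure_iUnion hdisj hmeas']
  have hterm : ∀ s : Zd 5,
      μ ((fun ω => ∑ k ∈ Finset.range n, X k ω) ⁻¹' {v - s} ∩ X n ⁻¹' {s})
        = μ {ω | (∑ k ∈ Finset.range n, X k ω) = v - s}
            * (if s ∈ stepSetD 5 then (10 : ℝ≥0∞)⁻¹ else 0) := by
    intro s
    rw [hind.measure_inter_preimage_eq_mul _ _ (measurableSet_singleton _)
      (measurableSet_singleton _)]
    have e1 : (fun ω => ∑ k ∈ Finset.range n, X k ω) ⁻¹' {v - s}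
        = {ω | (∑ k ∈ Finset.range n, X k ω) = v - s} := by ext ω; simp
    have e2 : X n ⁻¹' {s} = {ω | X n ω = s} := by ext ω; simp
    rw [e1, e2, hdist n s]
  calc (∑' s : Zd 5, μ ((fun ω => ∑ k ∈ Finset.range n, X k ω) ⁻¹' {v - s} ∩ X n ⁻¹' {s}))
      = ∑' s : Zd 5, μ {ω | (∑ k ∈ Finset.range n, X k ω) = v - s}
          * (if s ∈ stepSetD 5 then (10 : ℝ≥0∞)⁻¹ else 0) := by
        exact tsum_congr hterm
    _ = ∑ s ∈ stepSetD 5, μ {ω | (∑ k ∈ Finset.range n, X k ω) = v - s}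
          * (if s ∈ stepSetD 5 then (10 : ℝ≥0∞)⁻¹ else 0) := by
        refine tsum_eq_sum ?_
        intro s hs
        simp [hs]
    _ = ∑ s ∈ stepSetD 5, (10:ℝ≥0∞)⁻¹ * μ {ω | (∑ k ∈ Finset.range n, X k ω) = v - s} := by
        refine Finset.sum_congr rfl (fun s hs => ?_)
        rw [if_pos hs, mul_comm]

lemma step_symm (hmeas : ∀ n, Measurable (X n))
    (hindep : iIndepFun X μ)
    (hdist : ∀ n v, μ {ω | X n ω = v} = if v ∈ stepSetD 5 then (10 : ℝ≥0∞)⁻¹ else 0)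
    (n : ℕ) (v : Zd 5) :
    μ {ω | (∑ k ∈ Finset.range n, X k ω) = v}
      = μ {ω | (∑ k ∈ Finset.range n, X k ω) = -v} := by
  induction n generalizing v with
  | zero =>
    have hs : {ω : Ω | (∑ k ∈ Finset.range 0, X k ω) = v}
        = {ω : Ω | (∑ k ∈ Finset.range 0, X k ω) = -v} := by
      ext ω
      simp only [Set.mem_setOf_eq, Finset.sum_range_zero]
      rw [eq_comm, eq_comm (a := (0:Zd 5)) (b := -v), neg_eq_zero]
    rw [hs]
  | succ n ih =>
    rw [step_recursion μ X hmeas hindep hdist n v,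
      step_recursion μ X hmeas hindep hdist n (-v)]
    rw [← Finset.sum_nbij' (i := fun s => -s) (j := fun s => -s)]
    · intro s hs; exact neg_mem_step s hs
    · intro s hs; exact neg_mem_step s hs
    · intro s _; simp
    · intro s _; simp
    · intro s _
      congr 1
      rw [show v - -s = v + s from by abel, ih (v + s),
        show -(v + s) = -v - s from by abel]



/-- squared norm as a real number -/
def Q (x : Zd 5) : ℝ := ∑ j, ((x j : ℝ))^2

lemma Q_nonneg (x : Zd 5) : 0 ≤ Q x := Finset.sum_nonneg fun j _ => sq_nonneg _

lemma Q_zero : Q 0 = 0 := by simp [Q]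

lemma sq_le_Q (x : Zd 5) (j : Fin 5) : ((x j : ℝ))^2 ≤ Q x :=
  Finset.single_le_sum (f := fun j => ((x j : ℝ))^2) (fun i _ => sq_nonneg _) (Finset.mem_univ j)

def stepFun (p : Fin 5 × Bool) : Zd 5 :=
  fun j => if j = p.1 then (if p.2 then (1:ℤ) else -1) else 0

lemma stepFun_inj : Function.Injective stepFun := by decide

lemma stepSet_eq_image : stepSetD 5 = Finset.image stepFun Finset.univ := rfl

lemma Q_add_stepFun (x : Zd 5) (p : Fin 5 × Bool) :
    Q (x + stepFun p) = Q x + 2 * (if p.2 then (1:ℝ) else -1) * (x p.1 : ℝ) + 1 := by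
  classical
  obtain ⟨j, b⟩ := p
  have hε : ∀ i, ((stepFun (j, b)) i : ℝ) = if i = j then (if b then (1:ℝ) else -1) else 0 := by
    intro i; by_cases h : i = j <;> by_cases hb : b <;> simp [stepFun, h, hb]
  set ε : ℝ := if b then (1:ℝ) else -1 with hε'
  have hε2 : ε^2 = 1 := by rcases b <;> simp [hε'] <;> norm_num
  have : Q (x + stepFun (j, b)) = ∑ i, (((x i : ℝ)) + (if i = j then ε else 0))^2 := by
    unfold Q
    refine Finset.sum_congr rfl (fun i _ => ?_)
    rw [Pi.add_apply, Int.cast_add, hε i]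
  rw [this]
  have expand : ∀ i : Fin 5, (((x i : ℝ)) + (if i = j then ε else 0))^2
      = (x i : ℝ)^2 + (if i = j then 2 * ε * (x i : ℝ) + ε^2 else 0) := by
    intro i; split <;> ring
  rw [Finset.sum_congr rfl (fun i _ => expand i), Finset.sum_add_distrib,
    Finset.sum_ite_eq' Finset.univ j (fun i => 2 * ε * (x i : ℝ) + ε^2)]
  simp [Q, hε2]
  ring

lemma pair_ineq (u t : ℝ) (hu : 0 ≤ u) (ht : t^2 ≤ u) :
    1/(u + 2*t + 2) + 1/(u - 2*t + 2)
      ≤ 2/(u+2) + 8*t^2/((u+2)*(u^2+4)) := by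
  have h1 : 0 < u + 2*t + 2 := by nlinarith [sq_nonneg (t+1)]
  have h2 : 0 < u - 2*t + 2 := by nlinarith [sq_nonneg (t-1)]
  have hM : 0 < u + 2 := by linarith
  have h3 : (0:ℝ) < u^2 + 4 := by positivity
  rw [div_add_div _ _ (ne_of_gt h1) (ne_of_gt h2), div_add_div _ _ (ne_of_gt hM) (by positivity),
    div_le_div_iff₀ (by positivity) (by positivity)]
  nlinarith [mul_nonneg (mul_nonneg (sq_nonneg t) (sub_nonneg.2 ht)) h3.le,
    mul_nonneg (mul_nonneg (sq_nonneg t) (sub_nonneg.2 ht)) hM.le,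
    mul_nonneg (sq_nonneg t) (sub_nonneg.2 ht), sq_nonneg t, h3, hM, h1, h2]

lemma total_ineq (u : ℝ) (hu : 0 ≤ u) :
    10/(u+2) + 8*u/((u+2)*(u^2+4)) ≤ 10/(u+1) := by
  have h1 : (0:ℝ) < u + 2 := by linarith
  have h2 : (0:ℝ) < u + 1 := by linarith
  have h3 : (0:ℝ) < u^2 + 4 := by positivity
  rw [div_add_div _ _ (ne_of_gt h1) (by positivity), div_le_div_iff₀ (by positivity) h2]
  nlinarith [sq_nonneg (u - 2), mul_nonneg (mul_nonneg hu hu) hu, sq_nonneg u,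
    mul_nonneg (sq_nonneg (u-2)) hu, mul_nonneg (sq_nonneg (u-2)) h1.le]

lemma lyapunov (x : Zd 5) :
    ∑ s ∈ stepSetD 5, 1/(Q (x + s) + 1) ≤ 10/(Q x + 1) := by
  rw [stepSet_eq_image, Finset.sum_image (fun p _ q _ h => stepFun_inj h)]
  have hrw : ∀ p : Fin 5 × Bool, 1/(Q (x + stepFun p) + 1)
      = 1/(Q x + 2 * (if p.2 then (1:ℝ) else -1) * (x p.1 : ℝ) + 2) := by
    intro p; rw [Q_add_stepFun]; ring_nf
  rw [Finset.sum_congr rfl (fun p _ => hrw p)]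
  rw [Fintype.sum_prod_type]
  have hsum : ∀ j : Fin 5, ∑ b : Bool, 1/(Q x + 2 * (if b then (1:ℝ) else -1) * (x j : ℝ) + 2)
      = 1/(Q x + 2*(x j : ℝ) + 2) + 1/(Q x - 2*(x j : ℝ) + 2) := by
    intro j
    rw [Fintype.sum_bool]
    simp only [if_true, Bool.false_eq_true, if_false]
    ring
  rw [Finset.sum_congr rfl (fun j _ => hsum j)]
  have key : ∀ j : Fin 5, 1/(Q x + 2*(x j : ℝ) + 2) + 1/(Q x - 2*(x j : ℝ) + 2)
      ≤ 2/(Q x + 2) + 8*((x j : ℝ))^2/((Q x + 2)*((Q x)^2+4)) :=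
    fun j => pair_ineq (Q x) ((x j : ℝ)) (Q_nonneg x) (sq_le_Q x j)
  calc (∑ j : Fin 5, (1/(Q x + 2*(x j : ℝ) + 2) + 1/(Q x - 2*(x j : ℝ) + 2)))
      ≤ ∑ j : Fin 5, (2/(Q x + 2) + 8*((x j : ℝ))^2/((Q x + 2)*((Q x)^2+4))) :=
        Finset.sum_le_sum (fun j _ => key j)
    _ = 10/(Q x + 2) + 8*(Q x)/((Q x + 2)*((Q x)^2+4)) := by
        rw [Finset.sum_add_distrib]
        have : ∑ j : Fin 5, 8*((x j : ℝ))^2/((Q x + 2)*((Q x)^2+4))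
            = 8*(Q x)/((Q x + 2)*((Q x)^2+4)) := by
          rw [← Finset.sum_div, ← Finset.mul_sum]; rfl
        rw [this]
        norm_num
        ring
    _ ≤ 10/(Q x + 1) := total_ineq (Q x) (Q_nonneg x)

lemma Q_step (p : Fin 5 × Bool) : Q (stepFun p) = 1 := by
  have := Q_add_stepFun 0 p
  simpa [Q_zero] using this

lemma lyapunov_at_zero :
    ∑ s ∈ stepSetD 5, 1/(Q (0 + s) + 1) = 5 := by
  rw [stepSet_eq_image, Finset.sum_image (fun p _ q _ h => stepFun_inj h)]
  have : ∀ p : Fin 5 × Bool, 1/(Q ((0:Zd 5) + stepFun p) + 1) = 1/2 := by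
    intro p
    rw [zero_add, Q_step]
    norm_num
  rw [Finset.sum_congr rfl (fun p _ => this p)]
  simp
  norm_num



lemma ofReal_inv_ten : ((10:ℝ≥0∞))⁻¹ = ENNReal.ofReal (1/10) := by
  rw [← ENNReal.ofReal_ofNat, ← ENNReal.ofReal_inv_of_pos (by norm_num)]
  norm_num

lemma ofReal_inv_two : ((2:ℝ≥0∞))⁻¹ = ENNReal.ofReal (1/2) := by
  rw [← ENNReal.ofReal_ofNat, ← ENNReal.ofReal_inv_of_pos (by norm_num)]
  norm_num

set_option maxHeartbeats 1000000 in
lemma green_le_two (hmeas : ∀ n, Measurable (X n))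
    (hindep : iIndepFun X μ)
    (hdist : ∀ n v, μ {ω | X n ω = v} = if v ∈ stepSetD 5 then (10 : ℝ≥0∞)⁻¹ else 0)
    (v : Zd 5) :
    (∑' n : ℕ, μ {ω | (∑ k ∈ Finset.range n, X k ω) = v}) ≤ 2 := by
  classical
  set g : Zd 5 → ℝ≥0∞ := fun y => ENNReal.ofReal (1/(Q (y - v) + 1)) with hgdef
  have hg1 : ∀ y, g y ≤ 1 := by
    intro y
    rw [hgdef]
    refine ENNReal.ofReal_le_one.2 ?_
    rw [div_le_one (by linarith [Q_nonneg (y - v)])]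
    linarith [Q_nonneg (y - v)]
  have hsup : ∀ y, (∑ s ∈ stepSetD 5, (10:ℝ≥0∞)⁻¹ * g (y + s))
      + (if y = v then (2:ℝ≥0∞)⁻¹ else 0) ≤ g y := by
    intro y
    have hshift : ∀ s : Zd 5, g (y + s) = ENNReal.ofReal (1/(Q ((y - v) + s) + 1)) := by
      intro s
      have h : y + s - v = y - v + s := by abel
      rw [hgdef]
      simp only [h]
    have hsum0 : ∑ s ∈ stepSetD 5, (10:ℝ≥0∞)⁻¹ * g (y + s)
        = (10:ℝ≥0∞)⁻¹ * ENNReal.ofReal (∑ s ∈ stepSetD 5, 1/(Q ((y - v) + s) + 1)) := by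
      rw [← Finset.mul_sum]
      congr 1
      rw [ENNReal.ofReal_sum_of_nonneg (fun s _ => by have := Q_nonneg ((y - v) + s); positivity)]
      exact Finset.sum_congr rfl (fun s _ => hshift s)
    rw [hsum0]
    by_cases hy : y = v
    · subst hy
      rw [if_pos rfl, sub_self, lyapunov_at_zero, hgdef]
      simp only [sub_self, Q_zero]
      norm_num
      rw [show (5:ℝ≥0∞) = ENNReal.ofReal 5 by norm_num, ofReal_inv_ten, ofReal_inv_two,
        ← ENNReal.ofReal_mul (by norm_num), ← ENNReal.ofReal_add (by norm_num) (by norm_num),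
        show (1:ℝ≥0∞) = ENNReal.ofReal 1 by norm_num,
        ENNReal.ofReal_le_ofReal_iff (by norm_num)]
      norm_num
    · rw [if_neg hy, add_zero, hgdef]
      calc (10:ℝ≥0∞)⁻¹ * ENNReal.ofReal (∑ s ∈ stepSetD 5, 1/(Q ((y - v) + s) + 1))
          ≤ (10:ℝ≥0∞)⁻¹ * ENNReal.ofReal (10/(Q (y - v) + 1)) := by
            exact mul_le_mul_right (ENNReal.ofReal_le_ofReal (lyapunov (y - v))) _
        _ = ENNReal.ofReal (1/(Q (y - v) + 1)) := by
            rw [ofReal_inv_ten, ← ENNReal.ofReal_mul (by norm_num)]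
            congr 1
            have hpos : 0 < Q (y - v) + 1 := by linarith [Q_nonneg (y - v)]
            field_simp
  set T : ℕ → Zd 5 → ℝ≥0∞ := fun n y => μ {ω | (∑ k ∈ Finset.range n, X k ω) = y} with hTdef
  set e : ℕ → ℝ≥0∞ := fun n => ∑' y : Zd 5, T n y * g y with hedef
  have he0 : e 0 ≤ 1 := by
    have hz : ∀ y : Zd 5, y ≠ 0 → T 0 y * g y = 0 := by
      intro y hy
      have hempty : {ω : Ω | (∑ k ∈ Finset.range 0, X k ω) = y} = ∅ := by
        ext ω
        simp only [Set.mem_setOf_eq, Finset.sum_range_zero, Set.mem_empty_iff_false, iff_false]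
        exact fun h => hy h.symm
      have hT0 : T 0 y = 0 := by
        rw [hTdef]
        simp only []
        rw [hempty]
        exact measure_empty
      rw [hT0, zero_mul]
    rw [hedef]
    simp only []
    rw [tsum_eq_single 0 hz]
    calc T 0 0 * g 0 ≤ 1 * 1 := by
          refine mul_le_mul' ?_ (hg1 0)
          rw [hTdef]
          exact le_trans (measure_mono (Set.subset_univ _)) (by simp)
      _ = 1 := one_mul 1
  have hrec : ∀ n, e (n+1) + 2⁻¹ * T n v ≤ e n := by
    intro n
    have hstep1 : e (n+1) = ∑' z : Zd 5, T n z * (∑ s ∈ stepSetD 5, (10:ℝ≥0∞)⁻¹ * g (z + s)) := by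
      rw [hedef]
      simp only []
      have h1 : ∀ y : Zd 5, T (n+1) y * g y
          = ∑ s ∈ stepSetD 5, ((10:ℝ≥0∞)⁻¹ * T n (y - s) * g y) := by
        intro y
        rw [hTdef]
        simp only []
        rw [step_recursion μ X hmeas hindep hdist n y, Finset.sum_mul]
      rw [tsum_congr h1, Summable.tsum_finsetSum (fun s _ => ENNReal.summable)]
      have h2 : ∀ s ∈ stepSetD 5,
          (∑' y : Zd 5, (10:ℝ≥0∞)⁻¹ * T n (y - s) * g y)
            = ∑' z : Zd 5, (10:ℝ≥0∞)⁻¹ * T n z * g (z + s) := by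
        intro s _
        rw [← Equiv.tsum_eq (Equiv.addRight s) (fun y => (10:ℝ≥0∞)⁻¹ * T n (y - s) * g y)]
        refine tsum_congr (fun z => ?_)
        simp only [Equiv.coe_addRight, add_sub_cancel_right]
      rw [Finset.sum_congr rfl h2, ← Summable.tsum_finsetSum (fun s _ => ENNReal.summable)]
      refine tsum_congr (fun z => ?_)
      rw [Finset.mul_sum]
      refine Finset.sum_congr rfl (fun s _ => ?_)
      ring
    have hstep2 : (2:ℝ≥0∞)⁻¹ * T n v
        = ∑' z : Zd 5, T n z * (if z = v then (2:ℝ≥0∞)⁻¹ else 0) := by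
      rw [tsum_eq_single v (fun z hz => by rw [if_neg hz, mul_zero])]
      rw [if_pos rfl, mul_comm]
    rw [hstep1, hstep2, ← ENNReal.tsum_add]
    refine Summable.tsum_le_tsum (fun z => ?_) ENNReal.summable ENNReal.summable
    rw [← mul_add]
    exact mul_le_mul_right (hsup z) _
  have hN : ∀ N, (∑ n ∈ Finset.range N, 2⁻¹ * T n v) + e N ≤ e 0 := by
    intro N
    induction N with
    | zero => simp
    | succ N ihN =>
      rw [Finset.sum_range_succ, add_assoc, add_comm (2⁻¹ * T N v) (e (N+1)), ← add_assoc]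
      calc (∑ n ∈ Finset.range N, 2⁻¹ * T n v) + e (N + 1) + 2⁻¹ * T N v
          ≤ (∑ n ∈ Finset.range N, 2⁻¹ * T n v) + e N := by
            rw [add_assoc]
            exact add_le_add_right (hrec N) _
        _ ≤ e 0 := ihN
  have hpart : ∀ N, ∑ n ∈ Finset.range N, T n v ≤ 2 := by
    intro N
    have h1 : (∑ n ∈ Finset.range N, 2⁻¹ * T n v) ≤ 1 :=
      le_trans (le_trans le_self_add (hN N)) he0
    calc ∑ n ∈ Finset.range N, T n v
        = 2 * ∑ n ∈ Finset.range N, 2⁻¹ * T n v := by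
          rw [Finset.mul_sum]
          refine Finset.sum_congr rfl (fun n _ => ?_)
          rw [← mul_assoc, ENNReal.mul_inv_cancel (by norm_num) (by norm_num), one_mul]
      _ ≤ 2 * 1 := mul_le_mul_right h1 2
      _ = 2 := mul_one 2
  exact Summable.tsum_le_of_sum_range_le ENNReal.summable hpart



lemma hit_le_green_raw (x : Zd 5) (B : Finset (Zd 5)) :
    μ {ω | ∃ n, 1 ≤ n ∧ x + ∑ k ∈ Finset.range n, X k ω ∈ B}
      ≤ ∑ y ∈ B, ∑' n : ℕ, μ {ω | (∑ k ∈ Finset.range n, X k ω) = y - x} := by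
  have hsub : {ω | ∃ n, 1 ≤ n ∧ x + ∑ k ∈ Finset.range n, X k ω ∈ B}
      ⊆ ⋃ n : ℕ, ⋃ y ∈ B, {ω | (∑ k ∈ Finset.range n, X k ω) = y - x} := by
    rintro ω ⟨n, -, hn⟩
    refine Set.mem_iUnion.2 ⟨n, ?_⟩
    refine Set.mem_iUnion₂.2 ⟨x + ∑ k ∈ Finset.range n, X k ω, hn, ?_⟩
    simp only [Set.mem_setOf_eq]
    abel
  calc μ {ω | ∃ n, 1 ≤ n ∧ x + ∑ k ∈ Finset.range n, X k ω ∈ B}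
      ≤ μ (⋃ n : ℕ, ⋃ y ∈ B, {ω | (∑ k ∈ Finset.range n, X k ω) = y - x}) :=
        measure_mono hsub
    _ ≤ ∑' n : ℕ, μ (⋃ y ∈ B, {ω | (∑ k ∈ Finset.range n, X k ω) = y - x}) :=
        measure_iUnion_le _
    _ ≤ ∑' n : ℕ, ∑ y ∈ B, μ {ω | (∑ k ∈ Finset.range n, X k ω) = y - x} :=
        Summable.tsum_le_tsum (fun n => measure_biUnion_finset_le _ _) ENNReal.summable ENNReal.summable
    _ = ∑ y ∈ B, ∑' n : ℕ, μ {ω | (∑ k ∈ Finset.range n, X k ω) = y - x} :=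
        Summable.tsum_finsetSum (fun _ _ => ENNReal.summable)

variable [IsProbabilityMeasure μ]

lemma green_ne_top (hmeas : ∀ n, Measurable (X n))
    (hindep : iIndepFun X μ)
    (hdist : ∀ n v, μ {ω | X n ω = v} = if v ∈ stepSetD 5 then (10 : ℝ≥0∞)⁻¹ else 0)
    (v : Zd 5) :
    (∑' n : ℕ, μ {ω | (∑ k ∈ Finset.range n, X k ω) = v}) ≠ ⊤ :=
  ((green_le_two μ X hmeas hindep hdist v).trans_lt (by norm_num)).ne

lemma greenFn_symm (hmeas : ∀ n, Measurable (X n))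
    (hindep : iIndepFun X μ)
    (hdist : ∀ n v, μ {ω | X n ω = v} = if v ∈ stepSetD 5 then (10 : ℝ≥0∞)⁻¹ else 0)
    (v : Zd 5) :
    greenFn μ X v = greenFn μ X (-v) := by
  unfold greenFn
  congr 1
  exact tsum_congr (fun n => step_symm μ X hmeas hindep hdist n v)

lemma one_le_greenFn_zero (hmeas : ∀ n, Measurable (X n))
    (hindep : iIndepFun X μ)
    (hdist : ∀ n v, μ {ω | X n ω = v} = if v ∈ stepSetD 5 then (10 : ℝ≥0∞)⁻¹ else 0) :
    1 ≤ greenFn μ X 0 := by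
  unfold greenFn
  have h0 : μ {ω | (∑ k ∈ Finset.range 0, X k ω) = 0} = 1 := by
    have : {ω : Ω | (∑ k ∈ Finset.range 0, X k ω) = 0} = Set.univ := by
      ext ω; simp
    rw [this, measure_univ]
  have hle : (1:ℝ≥0∞) ≤ ∑' n : ℕ, μ {ω | (∑ k ∈ Finset.range n, X k ω) = 0} := by
    rw [← h0]
    exact ENNReal.le_tsum 0
  have := ENNReal.toReal_mono (green_ne_top μ X hmeas hindep hdist 0) hle
  simpa using this

lemma hit_le_sum_green_raw (hmeas : ∀ n, Measurable (X n))
    (hindep : iIndepFun X μ)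
    (hdist : ∀ n v, μ {ω | X n ω = v} = if v ∈ stepSetD 5 then (10 : ℝ≥0∞)⁻¹ else 0)
    (x : Zd 5) (B : Finset (Zd 5)) :
    (μ {ω | ∃ n, 1 ≤ n ∧ x + ∑ k ∈ Finset.range n, X k ω ∈ B}).toReal
      ≤ ∑ y ∈ B, greenFn μ X (y - x) := by
  have h1 := hit_le_green_raw μ X x B
  have h2 : ∀ y ∈ B, (∑' n : ℕ, μ {ω | (∑ k ∈ Finset.range n, X k ω) = y - x}) ≠ ⊤ :=
    fun y _ => green_ne_top μ X hmeas hindep hdist (y - x)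
  calc (μ {ω | ∃ n, 1 ≤ n ∧ x + ∑ k ∈ Finset.range n, X k ω ∈ B}).toReal
      ≤ (∑ y ∈ B, ∑' n : ℕ, μ {ω | (∑ k ∈ Finset.range n, X k ω) = y - x}).toReal :=
        ENNReal.toReal_mono (ENNReal.sum_ne_top.2 h2) h1
    _ = ∑ y ∈ B, greenFn μ X (y - x) := ENNReal.toReal_sum h2

lemma hit_le_sum_green (hmeas : ∀ n, Measurable (X n))
    (hindep : iIndepFun X μ)
    (hdist : ∀ n v, μ {ω | X n ω = v} = if v ∈ stepSetD 5 then (10 : ℝ≥0∞)⁻¹ else 0)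
    (x : Zd 5) (B : Finset (Zd 5)) :
    (μ {ω | ∃ n, 1 ≤ n ∧ x + ∑ k ∈ Finset.range n, X k ω ∈ B}).toReal
      ≤ ∑ y ∈ B, greenFn μ X (x - y) := by
  refine (hit_le_sum_green_raw μ X hmeas hindep hdist x B).trans ?_
  refine le_of_eq (Finset.sum_congr rfl (fun y _ => ?_))
  rw [greenFn_symm μ X hmeas hindep hdist (y - x), neg_sub]

lemma escProb_nonneg (A : Finset (Zd 5)) (x : Zd 5) : 0 ≤ escProb μ X A x :=
  ENNReal.toReal_nonneg

lemma escProb_le_one (A : Finset (Zd 5)) (x : Zd 5) : escProb μ X A x ≤ 1 := by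
  unfold escProb
  have h := prob_le_one (μ := μ)
    (s := {ω | ∀ n, 1 ≤ n → x + ∑ k ∈ Finset.range n, X k ω ∉ A})
  simpa using ENNReal.toReal_mono ENNReal.one_ne_top h

lemma escProb_union_le_left (A B : Finset (Zd 5)) (x : Zd 5) :
    escProb μ X (A ∪ B) x ≤ escProb μ X A x := by
  unfold escProb
  refine ENNReal.toReal_mono (measure_ne_top μ _) (measure_mono ?_)
  intro ω h n hn hA
  exact h n hn (Finset.mem_union_left _ hA)

lemma escProb_union_le_right (A B : Finset (Zd 5)) (x : Zd 5) :
    escProb μ X (A ∪ B) x ≤ escProb μ X B x := by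
  unfold escProb
  refine ENNReal.toReal_mono (measure_ne_top μ _) (measure_mono ?_)
  intro ω h n hn hB
  exact h n hn (Finset.mem_union_right _ hB)

lemma escProb_le_union_add_hit (A B : Finset (Zd 5)) (x : Zd 5) :
    escProb μ X A x ≤ escProb μ X (A ∪ B) x
      + (μ {ω | ∃ n, 1 ≤ n ∧ x + ∑ k ∈ Finset.range n, X k ω ∈ B}).toReal := by
  classical
  unfold escProb
  have hsub : {ω | ∀ n, 1 ≤ n → x + ∑ k ∈ Finset.range n, X k ω ∉ A}
      ⊆ {ω | ∀ n, 1 ≤ n → x + ∑ k ∈ Finset.range n, X k ω ∉ A ∪ B}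
        ∪ {ω | ∃ n, 1 ≤ n ∧ x + ∑ k ∈ Finset.range n, X k ω ∈ B} := by
    intro ω h
    by_cases hB : ∃ n, 1 ≤ n ∧ x + ∑ k ∈ Finset.range n, X k ω ∈ B
    · exact Set.mem_union_right _ hB
    · push_neg at hB
      refine Set.mem_union_left _ (fun n hn hmem => ?_)
      rcases Finset.mem_union.1 hmem with hA | hB'
      · exact h n hn hA
      · exact hB n hn hB'
  calc (μ {ω | ∀ n, 1 ≤ n → x + ∑ k ∈ Finset.range n, X k ω ∉ A}).toReal
      ≤ (μ ({ω | ∀ n, 1 ≤ n → x + ∑ k ∈ Finset.range n, X k ω ∉ A ∪ B}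
          ∪ {ω | ∃ n, 1 ≤ n ∧ x + ∑ k ∈ Finset.range n, X k ω ∈ B})).toReal :=
        ENNReal.toReal_mono (measure_ne_top μ _) (measure_mono hsub)
    _ ≤ (μ {ω | ∀ n, 1 ≤ n → x + ∑ k ∈ Finset.range n, X k ω ∉ A ∪ B}
          + μ {ω | ∃ n, 1 ≤ n ∧ x + ∑ k ∈ Finset.range n, X k ω ∈ B}).toReal :=
        ENNReal.toReal_mono (by
          exact ENNReal.add_ne_top.2 ⟨measure_ne_top μ _, measure_ne_top μ _⟩)
          (measure_union_le _ _)
    _ = _ := ENNReal.toReal_add (measure_ne_top μ _) (measure_ne_top μ _)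

lemma crossTerm_eq (A C' : Finset (Zd 5)) :
    crossTerm μ X A C'
      = ∑ x ∈ A, escProb μ X A x
          * ∑ z ∈ C', greenFn μ X (x - z) * escProb μ X C' z := by
  unfold crossTerm
  refine Finset.sum_congr rfl (fun x _ => ?_)
  rw [Finset.mul_sum]
  exact Finset.sum_congr rfl (fun z _ => by ring)

end SRW5

open SRW5 in
theorem stmt7
    {Ω : Type*} [MeasurableSpace Ω] (μ : Measure Ω) [IsProbabilityMeasure μ]
    (X : ℕ → Ω → Zd 5) (hmeas : ∀ n, Measurable (X n))
    (hindep : iIndepFun X μ)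
    (hdist : ∀ n v, μ {ω | X n ω = v} = if v ∈ stepSetD 5 then (10 : ℝ≥0∞)⁻¹ else 0) :
    (∀ A B C' : Finset (Zd 5),
        0 ≤ crossTerm μ X A C' + crossTerm μ X B C' - crossTerm μ X (A ∪ B) C') ∧
      ∃ C₀ > (0:ℝ), ∀ A B C' : Finset (Zd 5),
        crossTerm μ X A C' + crossTerm μ X B C' - crossTerm μ X (A ∪ B) C'
          ≤ C₀ * ((∑ x ∈ A, ∑ y ∈ B, ∑ z ∈ C',
                      greenFn μ X (x - y) * greenFn μ X (y - z))
                + (∑ x ∈ A, ∑ y ∈ B, ∑ z ∈ C',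
                      greenFn μ X (x - y) * greenFn μ X (x - z))) := by
  classical
  have hGnn : ∀ w, 0 ≤ greenFn μ X w := fun w => ENNReal.toReal_nonneg
  -- inner sum and its properties
  have main : ∀ A B C' : Finset (Zd 5),
      (0 ≤ crossTerm μ X A C' + crossTerm μ X B C' - crossTerm μ X (A ∪ B) C')
      ∧ crossTerm μ X A C' + crossTerm μ X B C' - crossTerm μ X (A ∪ B) C'
          ≤ ((∑ x ∈ A, ∑ y ∈ B, ∑ z ∈ C', greenFn μ X (x - y) * greenFn μ X (y - z))
            + (∑ x ∈ A, ∑ y ∈ B, ∑ z ∈ C', greenFn μ X (x - y) * greenFn μ X (x - z))) := by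
    intro A B C'
    set inner : Zd 5 → ℝ := fun w => ∑ z ∈ C', greenFn μ X (w - z) * escProb μ X C' z
      with hinner
    have hinn_nn : ∀ w, 0 ≤ inner w := by
      intro w
      exact Finset.sum_nonneg fun z _ =>
        mul_nonneg (hGnn _) (escProb_nonneg μ X C' z)
    have hinn_le : ∀ w, inner w ≤ ∑ z ∈ C', greenFn μ X (w - z) := by
      intro w
      exact Finset.sum_le_sum fun z _ =>
        mul_le_of_le_one_right (hGnn _) (escProb_le_one μ X C' z)
    have hsplitAB : ∀ f : Zd 5 → ℝ,
        ∑ w ∈ A ∪ B, f w = ∑ w ∈ A, f w + ∑ w ∈ B \ A, f w := by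
      intro f
      rw [← Finset.sum_union Finset.disjoint_sdiff, Finset.union_sdiff_self_eq_union]
    have hsplitB : ∀ f : Zd 5 → ℝ,
        ∑ w ∈ B, f w = ∑ w ∈ B \ A, f w + ∑ w ∈ B ∩ A, f w := by
      intro f
      rw [← Finset.sum_union (Finset.disjoint_sdiff_inter B A), Finset.sdiff_union_inter]
    have hAB : crossTerm μ X (A ∪ B) C'
        = (∑ x ∈ A, escProb μ X (A ∪ B) x * inner x)
          + (∑ y ∈ B \ A, escProb μ X (A ∪ B) y * inner y) := by
      rw [crossTerm_eq]
      exact hsplitAB _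
    have hB : crossTerm μ X B C'
        = (∑ y ∈ B \ A, escProb μ X B y * inner y)
          + (∑ y ∈ B ∩ A, escProb μ X B y * inner y) := by
      rw [crossTerm_eq]
      exact hsplitB _
    have hA : crossTerm μ X A C' = ∑ x ∈ A, escProb μ X A x * inner x := crossTerm_eq μ X A C'
    constructor
    · -- nonnegativity
      have h1 : ∑ x ∈ A, escProb μ X (A ∪ B) x * inner x
          ≤ ∑ x ∈ A, escProb μ X A x * inner x :=
        Finset.sum_le_sum fun x _ =>
          mul_le_mul_of_nonneg_right (escProb_union_le_left μ X A B x) (hinn_nn x)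
      have h2 : ∑ y ∈ B \ A, escProb μ X (A ∪ B) y * inner y
          ≤ ∑ y ∈ B, escProb μ X B y * inner y := by
        refine le_trans (Finset.sum_le_sum fun y _ =>
          mul_le_mul_of_nonneg_right (escProb_union_le_right μ X A B y) (hinn_nn y)) ?_
        refine Finset.sum_le_sum_of_subset_of_nonneg (Finset.sdiff_subset) fun y _ _ =>
          mul_nonneg (escProb_nonneg μ X B y) (hinn_nn y)
      have hBfull : crossTerm μ X B C' = ∑ y ∈ B, escProb μ X B y * inner y :=
        crossTerm_eq μ X B C'
      rw [hAB, hA, hBfull]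
      linarith
    · -- upper bound
      have hterm1 : (∑ x ∈ A, escProb μ X A x * inner x)
            - (∑ x ∈ A, escProb μ X (A ∪ B) x * inner x)
          ≤ ∑ x ∈ A, ∑ y ∈ B, ∑ z ∈ C', greenFn μ X (x - y) * greenFn μ X (x - z) := by
        rw [← Finset.sum_sub_distrib]
        refine Finset.sum_le_sum fun x _ => ?_
        rw [← sub_mul]
        have hd : escProb μ X A x - escProb μ X (A ∪ B) x
            ≤ (μ {ω | ∃ n, 1 ≤ n ∧ x + ∑ k ∈ Finset.range n, X k ω ∈ B}).toReal := by
          linarith [escProb_le_union_add_hit μ X A B x]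
        calc (escProb μ X A x - escProb μ X (A ∪ B) x) * inner x
            ≤ (μ {ω | ∃ n, 1 ≤ n ∧ x + ∑ k ∈ Finset.range n, X k ω ∈ B}).toReal
                * inner x := mul_le_mul_of_nonneg_right hd (hinn_nn x)
          _ ≤ (∑ y ∈ B, greenFn μ X (x - y)) * (∑ z ∈ C', greenFn μ X (x - z)) := by
              refine mul_le_mul (hit_le_sum_green μ X hmeas hindep hdist x B)
                (hinn_le x) (hinn_nn x) ?_
              exact Finset.sum_nonneg fun y _ => hGnn _
          _ = ∑ y ∈ B, ∑ z ∈ C', greenFn μ X (x - y) * greenFn μ X (x - z) :=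
              Finset.sum_mul_sum _ _ _ _
      have hterm2 : (∑ y ∈ B \ A, escProb μ X B y * inner y
              + ∑ y ∈ B ∩ A, escProb μ X B y * inner y)
            - (∑ y ∈ B \ A, escProb μ X (A ∪ B) y * inner y)
          ≤ ∑ x ∈ A, ∑ y ∈ B, ∑ z ∈ C', greenFn μ X (x - y) * greenFn μ X (y - z) := by
        have hc1 : ∑ y ∈ B \ A, escProb μ X B y * inner y
              - ∑ y ∈ B \ A, escProb μ X (A ∪ B) y * inner y
            ≤ ∑ y ∈ B \ A, (∑ x ∈ A, greenFn μ X (x - y)) * inner y := by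
          rw [← Finset.sum_sub_distrib]
          refine Finset.sum_le_sum fun y hy => ?_
          rw [← sub_mul]
          refine mul_le_mul_of_nonneg_right ?_ (hinn_nn y)
          have hd : escProb μ X B y - escProb μ X (A ∪ B) y
              ≤ (μ {ω | ∃ n, 1 ≤ n ∧ y + ∑ k ∈ Finset.range n, X k ω ∈ A}).toReal := by
            have h := escProb_le_union_add_hit μ X B A y
            have he : escProb μ X (B ∪ A) y = escProb μ X (A ∪ B) y := by
              rw [Finset.union_comm]
            linarith [h, he.symm.le]
          exact hd.trans (hit_le_sum_green_raw μ X hmeas hindep hdist y A)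
        have hc2 : ∑ y ∈ B ∩ A, escProb μ X B y * inner y
            ≤ ∑ y ∈ B ∩ A, (∑ x ∈ A, greenFn μ X (x - y)) * inner y := by
          refine Finset.sum_le_sum fun y hy => ?_
          refine mul_le_mul_of_nonneg_right ?_ (hinn_nn y)
          have hyA : y ∈ A := (Finset.mem_inter.1 hy).2
          have h1 : escProb μ X B y ≤ 1 := escProb_le_one μ X B y
          have h2 : (1:ℝ) ≤ greenFn μ X (y - y) := by
            rw [sub_self]
            exact one_le_greenFn_zero μ X hmeas hindep hdist
          have h3 : greenFn μ X (y - y) ≤ ∑ x ∈ A, greenFn μ X (x - y) := by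
            refine Finset.single_le_sum (f := fun x => greenFn μ X (x - y))
              (fun x _ => hGnn _) hyA
          linarith
        have hcomb : ∑ y ∈ B \ A, (∑ x ∈ A, greenFn μ X (x - y)) * inner y
              + ∑ y ∈ B ∩ A, (∑ x ∈ A, greenFn μ X (x - y)) * inner y
            = ∑ y ∈ B, (∑ x ∈ A, greenFn μ X (x - y)) * inner y := by
          rw [← Finset.sum_union (Finset.disjoint_sdiff_inter B A), Finset.sdiff_union_inter]
        have hfin : ∑ y ∈ B, (∑ x ∈ A, greenFn μ X (x - y)) * inner y
            ≤ ∑ x ∈ A, ∑ y ∈ B, ∑ z ∈ C', greenFn μ X (x - y) * greenFn μ X (y - z) := by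
          rw [Finset.sum_comm (s := A) (t := B)]
          refine Finset.sum_le_sum fun y hy => ?_
          calc (∑ x ∈ A, greenFn μ X (x - y)) * inner y
              ≤ (∑ x ∈ A, greenFn μ X (x - y)) * (∑ z ∈ C', greenFn μ X (y - z)) := by
                refine mul_le_mul_of_nonneg_left (hinn_le y) ?_
                exact Finset.sum_nonneg fun x _ => hGnn _
            _ = ∑ x ∈ A, greenFn μ X (x - y) * (∑ z ∈ C', greenFn μ X (y - z)) := by
                rw [Finset.sum_mul]
            _ = ∑ x ∈ A, ∑ z ∈ C', greenFn μ X (x - y) * greenFn μ X (y - z) := by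
                refine Finset.sum_congr rfl fun x _ => ?_
                rw [Finset.mul_sum]
        linarith [hc1, hc2, hcomb.le, hcomb.ge, hfin]
      rw [hAB, hA, hB]
      linarith [hterm1, hterm2]
  constructor
  · intro A B C'
    exact (main A B C').1
  · refine ⟨1, one_pos, fun A B C' => ?_⟩
    rw [one_mul]
    exact (main A B C').2
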